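/- (Theorem 4.2, part 1: entropy set for the cubic flux.) Let f(u) = (u³ − 3u)/2 and for u_B ∈ ℝ define E^entropy(u_B) = { u₀ ∈ ℝ : F(u_B) + U'(u_B)·(f(u₀) − f(u_B)) ≥ F(u₀) for every convex entropy pair (U,F) }. When the equation f(u) = f(u_B), u ≠ u_B, has exactly two solutions, denote by u_B^s < u_B^ℓ the smaller and larger of them. Then: E^entropy(u_B) = {u_B} if u_B < −2; E^entropy(−2) = {−2, 1}; E^entropy(u_B) = [u_B^s, 1] ∪ {u_B} if −2 < u_B < −1; E^entropy(u_B) = [−1, 1] if −1 ≤ u_B ≤ 1; E^entropy(u_B) = [−1, u_B^ℓ] ∪ {u_B} if 1 < u_B < 2; E^entropy(2) = {−1, 2}; and E^entropy(u_B) = {u_B} if u_B > 2. -/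

import Mathlib

/-- The cubic flux `f(u) = (u³ − 3u)/2`. -/
noncomputable def cubicFlux : ℝ → ℝ := fun u => (u ^ 3 - 3 * u) / 2

/-- The set of admissible boundary values based on the boundary entropy
inequalities for the cubic flux: `u₀` is admissible iff for every convex
entropy pair `(U,F)` (`U` of class C² with `U'' ≥ 0`, `F` differentiable with
`F' = U' f'`) one has `F(u_B) + U'(u_B)(f(u₀) − f(u_B)) ≥ F(u₀)`. -/
noncomputable def cubicEntropySet (uB : ℝ) : Set ℝ :=
  { u₀ : ℝ | ∀ U F : ℝ → ℝ, ContDiff ℝ 2 U → (∀ u, 0 ≤ deriv (deriv U) u) →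
      Differentiable ℝ F → (∀ u, deriv F u = deriv U u * deriv cubicFlux u) →
      F u₀ ≤ F uB + deriv U uB * (cubicFlux u₀ - cubicFlux uB) }



section Aux
open intervalIntegral Set

lemma hasDerivAt_cubicFlux (u : ℝ) : HasDerivAt cubicFlux ((3 * u ^ 2 - 3) / 2) u := by
  have : HasDerivAt (fun u : ℝ => (u ^ 3 - 3 * u) / 2) ((3 * u ^ 2 - 3) / 2) u := by
    have h1 : HasDerivAt (fun u : ℝ => u ^ 3 - 3 * u) (3 * u ^ 2 - 3) u := by
      convert ((hasDerivAt_pow 3 u).sub ((hasDerivAt_id u).const_mul 3)) using 1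
      · rfl
      · rfl
      · rfl
      · norm_num
    simpa using h1.div_const 2
  exact this

lemma deriv_cubicFlux (u : ℝ) : deriv cubicFlux u = (3 * u ^ 2 - 3) / 2 :=
  (hasDerivAt_cubicFlux u).deriv

lemma continuous_cubicFlux : Continuous cubicFlux := by
  unfold cubicFlux; continuity

lemma continuous_deriv_cubicFlux : Continuous (deriv cubicFlux) := by
  have : (deriv cubicFlux) = fun u => (3 * u ^ 2 - 3) / 2 := funext deriv_cubicFlux
  rw [this]; continuity

lemma hasDerivAt_primitive {g : ℝ → ℝ} (hg : Continuous g) (x : ℝ) :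
    HasDerivAt (fun u => ∫ t in (0:ℝ)..u, g t) (g x) x :=
  integral_hasDerivAt_right (hg.intervalIntegrable _ _)
    (hg.stronglyMeasurableAtFilter _ _) hg.continuousAt


lemma key_identity {U F : ℝ → ℝ} (hU : ContDiff ℝ 2 U) (hF : Differentiable ℝ F)
    (hF' : ∀ u, deriv F u = deriv U u * deriv cubicFlux u) (uB u₀ : ℝ) :
    F uB + deriv U uB * (cubicFlux u₀ - cubicFlux uB) - F u₀
      = ∫ t in uB..u₀, deriv (deriv U) t * (cubicFlux t - cubicFlux u₀) := by
  -- facts about U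
  have hU2 : ContDiff ℝ (1 + 1) U := by norm_num; exact hU
  have h1 := (contDiff_succ_iff_deriv.mp hU2)
  have hUdiff : Differentiable ℝ U := h1.1
  have hdU1 : ContDiff ℝ 1 (deriv U) := h1.2.2
  have hdUdiff : Differentiable ℝ (deriv U) := hdU1.differentiable one_ne_zero
  have hdUcont : Continuous (deriv U) := hdUdiff.continuous
  have hddUcont : Continuous (deriv (deriv U)) := (contDiff_one_iff_deriv.mp hdU1).2
  have hfc := continuous_deriv_cubicFlux
  have hderivFcont : Continuous (deriv F) := by
    have : deriv F = fun u => deriv U u * deriv cubicFlux u := funext hF'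
    rw [this]; exact hdUcont.mul hfc
  -- step 1 : FTC for F
  have step1 : ∫ t in uB..u₀, deriv U t * deriv cubicFlux t = F u₀ - F uB := by
    rw [show (fun t => deriv U t * deriv cubicFlux t) = deriv F from (funext hF').symm]
    exact integral_deriv_eq_sub (fun x _ => hF.differentiableAt)
      (hderivFcont.intervalIntegrable _ _)
  -- step 2 : integration by parts
  have step2 : ∫ t in uB..u₀, deriv U t * deriv cubicFlux t
      = deriv U u₀ * cubicFlux u₀ - deriv U uB * cubicFlux uB
        - ∫ t in uB..u₀, deriv (deriv U) t * cubicFlux t := by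
    exact integral_mul_deriv_eq_deriv_mul
      (fun x _ => (hdUdiff x).hasDerivAt)
      (fun x _ => (hasDerivAt_cubicFlux x).differentiableAt.hasDerivAt)
      ((hddUcont.intervalIntegrable _ _)) (hfc.intervalIntegrable _ _)
  -- step 3 : FTC for deriv U
  have step3 : ∫ t in uB..u₀, deriv (deriv U) t = deriv U u₀ - deriv U uB :=
    integral_deriv_eq_sub (fun x _ => hdUdiff.differentiableAt)
      (hddUcont.intervalIntegrable _ _)
  -- step 4 : linearity
  have step4 : ∫ t in uB..u₀, deriv (deriv U) t * (cubicFlux t - cubicFlux u₀)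
      = (∫ t in uB..u₀, deriv (deriv U) t * cubicFlux t)
        - (∫ t in uB..u₀, deriv (deriv U) t) * cubicFlux u₀ := by
    rw [← integral_mul_const]
    rw [← integral_sub (f := fun t => deriv (deriv U) t * cubicFlux t)
      (g := fun t => deriv (deriv U) t * cubicFlux u₀) ((hddUcont.mul continuous_cubicFlux).intervalIntegrable _ _)
      ((hddUcont.mul continuous_const).intervalIntegrable _ _)]
    congr 1; ext t; ring
  rw [step4, step3]
  have := step1.symm.trans step2
  nlinarith [this]


/-- The elementary membership criterion. -/
def memCrit (uB u₀ : ℝ) : Prop :=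
  (∀ t ∈ Icc uB u₀, cubicFlux u₀ ≤ cubicFlux t) ∧
  (∀ t ∈ Icc u₀ uB, cubicFlux t ≤ cubicFlux u₀)

lemma sufficiency {uB u₀ : ℝ} (h : memCrit uB u₀) : u₀ ∈ cubicEntropySet uB := by
  intro U F hU hU'' hF hF'
  have key := key_identity hU hF hF' uB u₀
  have hnn : 0 ≤ ∫ t in uB..u₀, deriv (deriv U) t * (cubicFlux t - cubicFlux u₀) := by
    rcases le_total uB u₀ with hle | hle
    · exact integral_nonneg hle (fun t ht =>
        mul_nonneg (hU'' t) (sub_nonneg.mpr (h.1 t ht)))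
    · rw [integral_symm]
      have h2 : 0 ≤ ∫ t in u₀..uB, -(deriv (deriv U) t * (cubicFlux t - cubicFlux u₀)) :=
        integral_nonneg hle (fun t ht => by
          have := mul_nonneg (hU'' t) (sub_nonneg.mpr (h.2 t ht)); nlinarith)
      rw [intervalIntegral.integral_neg] at h2
      linarith
  linarith


lemma necessity {uB u₀ : ℝ} (h : u₀ ∈ cubicEntropySet uB) {w : ℝ → ℝ}
    (hw : Continuous w) (hw0 : ∀ t, 0 ≤ w t) :
    0 ≤ ∫ t in uB..u₀, w t * (cubicFlux t - cubicFlux u₀) := by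
  set V : ℝ → ℝ := fun u => ∫ t in (0:ℝ)..u, w t with hVdef
  have hVderiv : ∀ x, HasDerivAt V (w x) x := hasDerivAt_primitive hw
  have hVdiff : Differentiable ℝ V := fun x => (hVderiv x).differentiableAt
  have hVcont : Continuous V := hVdiff.continuous
  set U : ℝ → ℝ := fun u => ∫ t in (0:ℝ)..u, V t with hUdef
  have hUderiv : ∀ x, HasDerivAt U (V x) x := hasDerivAt_primitive hVcont
  have hUdiff : Differentiable ℝ U := fun x => (hUderiv x).differentiableAt
  have hdU : deriv U = V := funext fun x => (hUderiv x).deriv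
  have hddU : deriv (deriv U) = w := by
    rw [hdU]; exact funext fun x => (hVderiv x).deriv
  have hUC2 : ContDiff ℝ 2 U := by
    rw [show (2 : WithTop ℕ∞) = 1 + 1 by norm_num, contDiff_succ_iff_deriv]
    refine ⟨hUdiff, by simp, ?_⟩
    rw [hdU, contDiff_one_iff_deriv]
    exact ⟨hVdiff, by rw [funext fun x => (hVderiv x).deriv]; exact hw⟩
  set F : ℝ → ℝ := fun u => ∫ t in (0:ℝ)..u, V t * deriv cubicFlux t with hFdef
  have hFderiv : ∀ x, HasDerivAt F (V x * deriv cubicFlux x) x :=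
    hasDerivAt_primitive (hVcont.mul continuous_deriv_cubicFlux)
  have hFdiff : Differentiable ℝ F := fun x => (hFderiv x).differentiableAt
  have hF' : ∀ x, deriv F x = deriv U x * deriv cubicFlux x := by
    intro x; rw [hdU]; exact (hFderiv x).deriv
  have hineq := h U F hUC2 (by rw [hddU]; exact hw0) hFdiff hF'
  have key := key_identity hUC2 hFdiff hF' uB u₀
  rw [hddU] at key
  linarith


lemma exists_bump_interval {a b : ℝ} (hab : a < b) {S : Set ℝ} (hS : IsOpen S) {t : ℝ}
    (ht : t ∈ Set.Icc a b) (htS : t ∈ S) :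
    ∃ c δ : ℝ, 0 < δ ∧ Set.Icc (c - δ) (c + δ) ⊆ Set.Ioo a b ∩ S := by
  have hne : (Set.Ioo a b ∩ S).Nonempty := by
    have htcl : t ∈ closure (Set.Ioo a b) := by
      rw [closure_Ioo hab.ne]; exact ht
    rcases mem_closure_iff_nhds.mp htcl S (hS.mem_nhds htS) with ⟨x, hx1, hx2⟩
    exact ⟨x, hx2, hx1⟩
  obtain ⟨c, hc⟩ := hne
  obtain ⟨ε, hε, hball⟩ := Metric.isOpen_iff.mp (isOpen_Ioo.inter hS) c hc
  refine ⟨c, ε / 2, by linarith, fun x hx => hball ?_⟩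
  rw [Metric.mem_ball, Real.dist_eq]
  rcases hx with ⟨h1, h2⟩
  rw [abs_lt]; constructor <;> linarith

lemma bump_neg {φ : ℝ → ℝ} (hφ : Continuous φ) {a b t₀ : ℝ} (hab : a < b)
    (ht₀ : t₀ ∈ Set.Icc a b) (hneg : φ t₀ < 0) :
    ∃ w : ℝ → ℝ, Continuous w ∧ (∀ t, 0 ≤ w t) ∧ (∫ t in a..b, w t * φ t) < 0 := by
  have hS : IsOpen {t : ℝ | φ t < 0} := isOpen_lt hφ continuous_const
  obtain ⟨c, δ, hδ, hsub⟩ := exists_bump_interval hab hS ht₀ hneg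
  set w : ℝ → ℝ := fun t => max (δ ^ 2 - (t - c) ^ 2) 0 with hwdef
  have hwc : Continuous w := (Continuous.sub continuous_const (by continuity)).max continuous_const
  have hw0 : ∀ t, 0 ≤ w t := fun t => le_max_right _ _
  refine ⟨w, hwc, hw0, ?_⟩
  set g : ℝ → ℝ := fun t => w t * φ t with hgdef
  have hgc : Continuous g := hwc.mul hφ
  have hmemlo : c - δ ∈ Set.Ioo a b := (hsub ⟨le_refl _, by linarith⟩).1
  have hmemhi : c + δ ∈ Set.Ioo a b := (hsub ⟨by linarith, le_refl _⟩).1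
  have ha : a < c - δ := hmemlo.1
  have hb : c + δ < b := hmemhi.2
  have hzero : ∀ t : ℝ, δ ^ 2 - (t - c) ^ 2 ≤ 0 → w t = 0 := fun t h => max_eq_right h
  have i1 : (∫ t in a..(c - δ), g t) = 0 := by
    rw [show (0:ℝ) = ∫ t in a..(c - δ), (0:ℝ) by simp]
    apply integral_congr
    intro t ht
    rw [Set.uIcc_of_le (by linarith : a ≤ c - δ)] at ht
    have : w t = 0 := hzero t (by nlinarith [ht.2, hδ])
    simp [hgdef, this]
  have i3 : (∫ t in (c + δ)..b, g t) = 0 := by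
    rw [show (0:ℝ) = ∫ t in (c + δ)..b, (0:ℝ) by simp]
    apply integral_congr
    intro t ht
    rw [Set.uIcc_of_le (by linarith : c + δ ≤ b)] at ht
    have : w t = 0 := hzero t (by nlinarith [ht.1, hδ])
    simp [hgdef, this]
  have i2 : (∫ t in (c - δ)..(c + δ), g t) < 0 := by
    have hpos : (0:ℝ) < ∫ t in (c - δ)..(c + δ), w t * (-(φ t)) := by
      apply intervalIntegral_pos_of_pos_on
        ((hwc.mul hφ.neg).intervalIntegrable _ _)
      · intro x hx
        have hxS : φ x < 0 := (hsub ⟨hx.1.le, hx.2.le⟩).2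
        have hwx : 0 < w x := by
          have : 0 < δ ^ 2 - (x - c) ^ 2 := by nlinarith [hx.1, hx.2]
          exact lt_max_of_lt_left this
        exact mul_pos hwx (by simp only [Pi.neg_apply]; linarith)
      · linarith
    have heq : (∫ t in (c - δ)..(c + δ), w t * (-(φ t)))
        = -∫ t in (c - δ)..(c + δ), g t := by
      rw [← intervalIntegral.integral_neg]
      apply integral_congr
      intro t _
      exact mul_neg _ _
    rw [heq] at hpos
    linarith
  have hsplit : (∫ t in a..b, g t)
      = (∫ t in a..(c - δ), g t) + (∫ t in (c - δ)..(c + δ), g t) + (∫ t in (c + δ)..b, g t) := by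
    rw [integral_add_adjacent_intervals (hgc.intervalIntegrable _ _) (hgc.intervalIntegrable _ _),
      integral_add_adjacent_intervals (hgc.intervalIntegrable _ _) (hgc.intervalIntegrable _ _)]
  rw [hsplit, i1, i3]; linarith


lemma mem_cubicEntropySet_iff {uB u₀ : ℝ} :
    u₀ ∈ cubicEntropySet uB ↔ memCrit uB u₀ := by
  constructor
  · intro h
    constructor
    · intro t ht
      by_contra hc
      push_neg at hc
      have hlt : uB < u₀ := by
        rcases lt_or_eq_of_le (ht.1.trans ht.2) with h' | h'
        · exact h'
        · exfalso
          have : t = u₀ := le_antisymm ht.2 (h' ▸ ht.1)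
          rw [this] at hc; exact lt_irrefl _ hc
      obtain ⟨w, hwc, hw0, hint⟩ := bump_neg
        (continuous_cubicFlux.sub continuous_const) hlt ht
        (by simpa using sub_neg.mpr hc)
      exact absurd (necessity h hwc hw0) (by push_neg; exact hint)
    · intro t ht
      by_contra hc
      push_neg at hc
      have hlt : u₀ < uB := by
        rcases lt_or_eq_of_le (ht.1.trans ht.2) with h' | h'
        · exact h'
        · exfalso
          have : t = u₀ := le_antisymm (h' ▸ ht.2) ht.1
          rw [this] at hc; exact lt_irrefl _ hc
      obtain ⟨w, hwc, hw0, hint⟩ := bump_neg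
        (continuous_const.sub continuous_cubicFlux)
        (φ := fun s => cubicFlux u₀ - cubicFlux s) hlt ht (by simpa using hc)
      have hnn := necessity h hwc hw0
      rw [integral_symm] at hnn
      have h2 : (∫ t in u₀..uB, w t * (cubicFlux t - cubicFlux u₀)) ≤ 0 := by linarith
      have h3 : (∫ t in u₀..uB, w t * (cubicFlux u₀ - cubicFlux t))
          = -∫ t in u₀..uB, w t * (cubicFlux t - cubicFlux u₀) := by
        rw [← intervalIntegral.integral_neg]
        apply integral_congr
        intro s _
        ring
      rw [h3] at hint
      linarith
  · exact sufficiency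


lemma flux_mono_le {u v : ℝ} (hv : v ≤ -1) (huv : u < v) : cubicFlux u < cubicFlux v := by
  simp only [cubicFlux]
  nlinarith [mul_pos (sub_pos.mpr huv) (sub_pos.mpr huv), sq_nonneg (u + v),
    mul_pos (by linarith : (0:ℝ) < -v) (by linarith : (0:ℝ) < -u), sq_nonneg (v + 1)]

lemma flux_mono_ge {u v : ℝ} (hu : 1 ≤ u) (huv : u < v) : cubicFlux u < cubicFlux v := by
  simp only [cubicFlux]
  have h1 : (1:ℝ) ≤ u ^ 2 := by nlinarith
  nlinarith [mul_pos (sub_pos.mpr huv) (by linarith : (0:ℝ) < u), sq_nonneg (v - u),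
    mul_pos (sub_pos.mpr huv) (sub_pos.mpr huv)]

lemma flux_anti {u v : ℝ} (hu : -1 ≤ u) (huv : u < v) (hv : v ≤ 1) :
    cubicFlux v < cubicFlux u := by
  simp only [cubicFlux]
  nlinarith [sq_nonneg (u + v), mul_pos (sub_pos.mpr huv) (sub_pos.mpr huv),
    mul_nonneg (by linarith : (0:ℝ) ≤ u + 1) (by linarith : (0:ℝ) ≤ 1 - v)]

lemma flux_mono_le' {u v : ℝ} (hv : v ≤ -1) (huv : u ≤ v) : cubicFlux u ≤ cubicFlux v := by
  rcases eq_or_lt_of_le huv with rfl | h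
  · exact le_refl _
  · exact (flux_mono_le hv h).le

lemma flux_mono_ge' {u v : ℝ} (hu : 1 ≤ u) (huv : u ≤ v) : cubicFlux u ≤ cubicFlux v := by
  rcases eq_or_lt_of_le huv with rfl | h
  · exact le_refl _
  · exact (flux_mono_ge hu h).le

lemma flux_anti' {u v : ℝ} (hu : -1 ≤ u) (huv : u ≤ v) (hv : v ≤ 1) :
    cubicFlux v ≤ cubicFlux u := by
  rcases eq_or_lt_of_le huv with rfl | h
  · exact le_refl _
  · exact (flux_anti hu h hv).le

lemma flux_ge_neg_one {u : ℝ} (h : -2 ≤ u) : -1 ≤ cubicFlux u := by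
  simp only [cubicFlux]
  nlinarith [mul_nonneg (mul_self_nonneg (u - 1)) (by linarith : (0:ℝ) ≤ u + 2)]

lemma flux_gt_neg_one {u : ℝ} (h : -2 < u) (h1 : u ≠ 1) : -1 < cubicFlux u := by
  simp only [cubicFlux]
  have h2 : (0:ℝ) < (u - 1) ^ 2 := sq_pos_of_ne_zero (sub_ne_zero.mpr h1)
  nlinarith [mul_pos h2 (by linarith : (0:ℝ) < u + 2)]

lemma flux_le_one {u : ℝ} (h : u ≤ 2) : cubicFlux u ≤ 1 := by
  simp only [cubicFlux]
  nlinarith [mul_nonneg (mul_self_nonneg (u + 1)) (by linarith : (0:ℝ) ≤ 2 - u)]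

lemma flux_lt_one {u : ℝ} (h : u < 2) (h1 : u ≠ -1) : cubicFlux u < 1 := by
  simp only [cubicFlux]
  have h2 : (0:ℝ) < (u + 1) ^ 2 := sq_pos_of_ne_zero (by intro hc; exact h1 (by linarith))
  nlinarith [mul_pos h2 (by linarith : (0:ℝ) < 2 - u)]

lemma flux_neg_two : cubicFlux (-2) = -1 := by norm_num [cubicFlux]
lemma flux_neg_one : cubicFlux (-1) = 1 := by norm_num [cubicFlux]
lemma flux_one : cubicFlux 1 = -1 := by norm_num [cubicFlux]
lemma flux_two : cubicFlux 2 = 1 := by norm_num [cubicFlux]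


lemma memCrit_self (uB : ℝ) : memCrit uB uB := by
  constructor <;> intro t ht <;>
    simp only [Icc_self, mem_singleton_iff] at ht <;> rw [ht]

lemma case_low {uB : ℝ} (h : uB < -2) : cubicEntropySet uB = {uB} := by
  ext u₀
  rw [mem_cubicEntropySet_iff, mem_singleton_iff]
  constructor
  · rintro ⟨h1, h2⟩
    by_contra hne
    rcases lt_or_gt_of_ne hne with hlt | hgt
    · have := h2 uB ⟨hlt.le, le_refl _⟩
      have := flux_mono_le (by linarith : uB ≤ -1) hlt
      linarith
    · have hle := h1 uB ⟨le_refl _, hgt.le⟩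
      rcases le_or_gt u₀ (-1) with hc | hc
      · have := flux_mono_le hc hgt
        linarith
      · have hA : -1 ≤ cubicFlux u₀ := flux_ge_neg_one (by linarith)
        have hB : cubicFlux uB < cubicFlux (-2) := flux_mono_le (by norm_num) h
        rw [flux_neg_two] at hB
        linarith
  · rintro rfl; exact memCrit_self _

lemma case_neg_two : cubicEntropySet (-2) = {-2, 1} := by
  ext u₀
  rw [mem_cubicEntropySet_iff, mem_insert_iff, mem_singleton_iff]
  constructor
  · rintro ⟨h1, h2⟩
    by_contra hne
    push_neg at hne
    obtain ⟨hne2, hne1⟩ := hne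
    rcases lt_or_gt_of_ne hne2 with hlt | hgt
    · have := h2 (-2) ⟨hlt.le, le_refl _⟩
      have := flux_mono_le (by norm_num) hlt
      rw [flux_neg_two] at *
      linarith
    · have hgt1 : -1 < cubicFlux u₀ := flux_gt_neg_one hgt hne1
      rcases le_or_gt u₀ 1 with hc | hc
      · have := h1 (-2) ⟨le_refl _, hgt.le⟩
        rw [flux_neg_two] at this
        linarith
      · have := h1 1 ⟨by norm_num, hc.le⟩
        rw [flux_one] at this
        linarith
  · rintro (rfl | rfl)
    · exact memCrit_self _
    · constructor
      · intro t ht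
        rw [flux_one]
        exact flux_ge_neg_one ht.1
      · intro t ht
        have : (1:ℝ) ≤ -2 := ht.1.trans ht.2
        norm_num at this

lemma case_mid {uB : ℝ} (h1 : -1 ≤ uB) (h2 : uB ≤ 1) :
    cubicEntropySet uB = Icc (-1) 1 := by
  ext u₀
  rw [mem_cubicEntropySet_iff, mem_Icc]
  constructor
  · rintro ⟨hc1, hc2⟩
    constructor
    · by_contra hc
      push_neg at hc
      have := hc2 (-1) ⟨hc.le, h1⟩
      rw [flux_neg_one] at this
      have := flux_lt_one (u := u₀) (by linarith) (by intro hx; rw [hx] at hc; linarith)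
      linarith
    · by_contra hc
      push_neg at hc
      have := hc1 1 ⟨h2, hc.le⟩
      rw [flux_one] at this
      have := flux_gt_neg_one (u := u₀) (by linarith) (by intro hx; rw [hx] at hc; linarith)
      linarith
  · rintro ⟨ha, hb⟩
    constructor
    · intro t ht
      exact flux_anti' (by linarith [ht.1]) ht.2 hb
    · intro t ht
      exact flux_anti' ha ht.1 (by linarith [ht.2])

lemma case_high {uB : ℝ} (h : 2 < uB) : cubicEntropySet uB = {uB} := by
  ext u₀
  rw [mem_cubicEntropySet_iff, mem_singleton_iff]
  constructor
  · rintro ⟨h1, h2⟩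
    by_contra hne
    rcases lt_or_gt_of_ne hne with hlt | hgt
    · have hle := h2 uB ⟨hlt.le, le_refl _⟩
      rcases le_or_gt 1 u₀ with hc | hc
      · have := flux_mono_ge hc hlt
        linarith
      · have hA : cubicFlux u₀ ≤ 1 := flux_le_one (by linarith)
        have hB : cubicFlux 2 < cubicFlux uB := flux_mono_ge (by norm_num) h
        rw [flux_two] at hB
        linarith
    · have := h1 uB ⟨le_refl _, hgt.le⟩
      have := flux_mono_ge (by linarith : (1:ℝ) ≤ uB) hgt
      linarith
  · rintro rfl; exact memCrit_self _

lemma case_two : cubicEntropySet 2 = {-1, 2} := by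
  ext u₀
  rw [mem_cubicEntropySet_iff, mem_insert_iff, mem_singleton_iff]
  constructor
  · rintro ⟨h1, h2⟩
    by_contra hne
    push_neg at hne
    obtain ⟨hne1, hne2⟩ := hne
    rcases lt_or_gt_of_ne hne2 with hlt | hgt
    · have hlt1 : cubicFlux u₀ < 1 := flux_lt_one hlt hne1
      rcases le_or_gt (-1) u₀ with hc | hc
      · have := h2 2 ⟨hlt.le, le_refl _⟩
        rw [flux_two] at this
        linarith
      · have := h2 (-1) ⟨hc.le, by norm_num⟩
        rw [flux_neg_one] at this
        linarith
    · have := h1 2 ⟨le_refl _, hgt.le⟩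
      have := flux_mono_ge (by norm_num) hgt
      rw [flux_two] at *
      linarith
  · rintro (rfl | rfl)
    · constructor
      · intro t ht
        have : (2:ℝ) ≤ -1 := ht.1.trans ht.2
        norm_num at this
      · intro t ht
        rw [flux_neg_one]
        exact flux_le_one ht.2
    · exact memCrit_self _


/-- If `u` is a solution of `f u = f uB` different from `uB`, it solves the quadratic. -/
lemma quad_root {uB u : ℝ} (hne : u ≠ uB) (hf : cubicFlux u = cubicFlux uB) :
    u ^ 2 + u * uB + uB ^ 2 - 3 = 0 := by
  have hp : (u - uB) * (u ^ 2 + u * uB + uB ^ 2 - 3) = 0 := by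
    simp only [cubicFlux] at hf
    linear_combination 2 * hf
  rcases mul_eq_zero.mp hp with hc | hc
  · exact absurd (sub_eq_zero.mp hc) hne
  · exact hc

lemma root_facts {uB uBs uBl : ℝ} (hsl : uBs < uBl)
    (hqs : uBs ^ 2 + uBs * uB + uB ^ 2 - 3 = 0)
    (hql : uBl ^ 2 + uBl * uB + uB ^ 2 - 3 = 0) :
    uBl = -uB - uBs ∧
      (1 - uBs) * (1 - uBl) = (uB + 2) * (uB - 1) ∧
      (-1 - uBs) * (-1 - uBl) = (uB - 2) * (uB + 1) := by
  have hsum : uBl = -uB - uBs := by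
    have hp2 : (uBs - uBl) * (uBs + uBl + uB) = 0 := by linear_combination hqs - hql
    rcases mul_eq_zero.mp hp2 with hc | hc
    · exact absurd (sub_eq_zero.mp hc) hsl.ne
    · linarith
  refine ⟨hsum, ?_, ?_⟩
  · rw [hsum]; linear_combination -hqs
  · rw [hsum]; linear_combination -hqs

lemma case_param_neg {uB uBs uBl : ℝ} (hA : -2 < uB) (hB : uB < -1) (hsl : uBs < uBl)
    (hsne : uBs ≠ uB) (hfs : cubicFlux uBs = cubicFlux uB)
    (hlne : uBl ≠ uB) (hfl : cubicFlux uBl = cubicFlux uB) :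
    cubicEntropySet uB = Icc uBs 1 ∪ {uB} := by
  obtain ⟨hsum, key2, key1⟩ :=
    root_facts hsl (quad_root hsne hfs) (quad_root hlne hfl)
  have hk2 : (1 - uBs) * (1 - uBl) < 0 := by rw [key2]; nlinarith
  have hk1 : 0 < (-1 - uBs) * (-1 - uBl) := by rw [key1]; nlinarith
  have hs_lt1 : uBs < 1 := by
    by_contra hcon
    push_neg at hcon
    nlinarith [mul_nonneg (by linarith : (0:ℝ) ≤ uBs - 1) (by linarith : (0:ℝ) ≤ uBl - 1)]
  have hl_gt1 : 1 < uBl := by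
    by_contra hcon
    push_neg at hcon
    nlinarith [mul_nonneg (by linarith : (0:ℝ) ≤ 1 - uBs) (by linarith : (0:ℝ) ≤ 1 - uBl)]
  have hs_gt : -1 < uBs := by
    by_contra hcon
    push_neg at hcon
    nlinarith [mul_nonpos_of_nonneg_of_nonpos
      (by linarith : (0:ℝ) ≤ -1 - uBs) (by linarith : -1 - uBl ≤ 0)]
  ext u₀
  rw [mem_cubicEntropySet_iff, mem_union, mem_Icc, mem_singleton_iff]
  constructor
  · rintro ⟨h1, h2⟩
    by_cases heq : u₀ = uB
    · exact Or.inr heq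
    · left
      have hgt : uB < u₀ := by
        rcases lt_or_gt_of_ne heq with hlt | hgt
        · exfalso
          have := h2 uB ⟨hlt.le, le_refl _⟩
          have := flux_mono_le (by linarith : uB ≤ -1) hlt
          linarith
        · exact hgt
      have hfle : cubicFlux u₀ ≤ cubicFlux uB := h1 uB ⟨le_refl _, hgt.le⟩
      constructor
      · by_contra hcon
        push_neg at hcon
        rcases le_or_gt u₀ (-1) with hc | hc
        · have := flux_mono_le hc hgt
          linarith
        · have := flux_anti hc.le hcon hs_lt1.le
          rw [hfs] at this
          linarith
      · by_contra hcon
        push_neg at hcon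
        have := h1 1 ⟨by linarith, hcon.le⟩
        rw [flux_one] at this
        have := flux_gt_neg_one (u := u₀) (by linarith) (by intro hx; rw [hx] at hcon; linarith)
        linarith
  · rintro (⟨ha, hb⟩ | rfl)
    · have huB : uB < u₀ := by linarith
      constructor
      · intro t ht
        rcases le_or_gt t (-1) with hc | hc
        · have e1 : cubicFlux u₀ ≤ cubicFlux uBs := flux_anti' hs_gt.le ha hb
          have e2 : cubicFlux uB ≤ cubicFlux t := flux_mono_le' hc ht.1
          rw [hfs] at e1
          linarith
        · exact flux_anti' hc.le ht.2 hb
      · intro t ht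
        exact absurd (ht.1.trans ht.2) (by linarith)
    · exact memCrit_self _

lemma case_param_pos {uB uBs uBl : ℝ} (hA : 1 < uB) (hB : uB < 2) (hsl : uBs < uBl)
    (hsne : uBs ≠ uB) (hfs : cubicFlux uBs = cubicFlux uB)
    (hlne : uBl ≠ uB) (hfl : cubicFlux uBl = cubicFlux uB) :
    cubicEntropySet uB = Icc (-1) uBl ∪ {uB} := by
  obtain ⟨hsum, key2, key1⟩ :=
    root_facts hsl (quad_root hsne hfs) (quad_root hlne hfl)
  have hk1 : (-1 - uBs) * (-1 - uBl) < 0 := by rw [key1]; nlinarith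
  have hk2 : 0 < (1 - uBs) * (1 - uBl) := by rw [key2]; nlinarith
  have hs_lt : uBs < -1 := by
    by_contra hcon
    push_neg at hcon
    nlinarith [mul_nonpos_of_nonpos_of_nonneg
      (by linarith : -1 - uBs ≤ 0) (by linarith : (0:ℝ) ≤ 0)]
  have hl_gt : -1 < uBl := by
    by_contra hcon
    push_neg at hcon
    nlinarith [mul_nonneg (by linarith : (0:ℝ) ≤ -1 - uBs) (by linarith : (0:ℝ) ≤ -1 - uBl)]
  have hl_lt1 : uBl < 1 := by
    by_contra hcon
    push_neg at hcon
    nlinarith [mul_nonpos_of_nonneg_of_nonpos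
      (by linarith : (0:ℝ) ≤ 1 - uBs) (by linarith : 1 - uBl ≤ 0)]
  ext u₀
  rw [mem_cubicEntropySet_iff, mem_union, mem_Icc, mem_singleton_iff]
  constructor
  · rintro ⟨h1, h2⟩
    by_cases heq : u₀ = uB
    · exact Or.inr heq
    · left
      have hlt : u₀ < uB := by
        rcases lt_or_gt_of_ne heq with hlt | hgt
        · exact hlt
        · exfalso
          have := h1 uB ⟨le_refl _, hgt.le⟩
          have := flux_mono_ge (by linarith : (1:ℝ) ≤ uB) hgt
          linarith
      have hfge : cubicFlux uB ≤ cubicFlux u₀ := h2 uB ⟨hlt.le, le_refl _⟩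
      constructor
      · by_contra hcon
        push_neg at hcon
        have := h2 (-1) ⟨hcon.le, by linarith⟩
        rw [flux_neg_one] at this
        have := flux_lt_one (u := u₀) (by linarith) (by intro hx; rw [hx] at hcon; linarith)
        linarith
      · by_contra hcon
        push_neg at hcon
        rcases le_or_gt 1 u₀ with hc | hc
        · have := flux_mono_ge hc hlt
          linarith
        · have := flux_anti hl_gt.le hcon hc.le
          rw [hfl] at this
          linarith
  · rintro (⟨ha, hb⟩ | rfl)
    · have huB : u₀ < uB := by linarith
      constructor
      · intro t ht
        exact absurd (ht.1.trans ht.2) (by linarith)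
      · intro t ht
        rcases le_or_gt t 1 with hc | hc
        · exact flux_anti' ha ht.1 hc
        · have e1 : cubicFlux t ≤ cubicFlux uB := flux_mono_ge' hc.le ht.2
          have e2 : cubicFlux uBl ≤ cubicFlux u₀ := flux_anti' ha hb hl_lt1.le
          rw [hfl] at e2
          linarith
    · exact memCrit_self _

end Aux

/-- Theorem 4.2, part 1, entropy set for the cubic flux
`f(u) = (u³−3u)/2`. Here, whenever the equation `f(u) = f(u_B)`, `u ≠ u_B`,
has exactly two solutions, `u_B^s < u_B^ℓ` denote the smaller and larger one. -/
theorem cubicEntropySet_eq (uB : ℝ) :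
    (uB < -2 → cubicEntropySet uB = {uB}) ∧
    (uB = -2 → cubicEntropySet uB = {-2, 1}) ∧
    (-2 < uB → uB < -1 → ∀ uBs uBl : ℝ, uBs < uBl →
      uBs ≠ uB → cubicFlux uBs = cubicFlux uB →
      uBl ≠ uB → cubicFlux uBl = cubicFlux uB →
      (∀ u : ℝ, u ≠ uB → cubicFlux u = cubicFlux uB → u = uBs ∨ u = uBl) →
      cubicEntropySet uB = Set.Icc uBs 1 ∪ {uB}) ∧
    (-1 ≤ uB → uB ≤ 1 → cubicEntropySet uB = Set.Icc (-1) 1) ∧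
    (1 < uB → uB < 2 → ∀ uBs uBl : ℝ, uBs < uBl →
      uBs ≠ uB → cubicFlux uBs = cubicFlux uB →
      uBl ≠ uB → cubicFlux uBl = cubicFlux uB →
      (∀ u : ℝ, u ≠ uB → cubicFlux u = cubicFlux uB → u = uBs ∨ u = uBl) →
      cubicEntropySet uB = Set.Icc (-1) uBl ∪ {uB}) ∧
    (uB = 2 → cubicEntropySet uB = {-1, 2}) ∧
    (2 < uB → cubicEntropySet uB = {uB}) := by
  refine ⟨fun h => case_low h, fun h => by subst h; exact case_neg_two, ?_,
    fun h1 h2 => case_mid h1 h2, ?_, fun h => by subst h; exact case_two,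
    fun h => case_high h⟩
  · intro hA hB uBs uBl hsl hsne hfs hlne hfl _
    exact case_param_neg hA hB hsl hsne hfs hlne hfl
  · intro hA hB uBs uBl hsl hsne hfs hlne hfl _
    exact case_param_pos hA hB hsl hsne hfs hlne hfl
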